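/- If α is not an integer multiple of π/4, and cos β = cos² α, then either α or β is an irrational multiple of π. -/

import Mathlib

open Polynomial IntermediateField

lemma multiset_prod_lt_one (s : Multiset ℝ) (hs : s ≠ 0)
    (h : ∀ x ∈ s, 0 ≤ x ∧ x < 1) : s.prod < 1 := by
  induction s using Multiset.induction with
  | empty => simp at hs
  | cons a t ih =>
    obtain ⟨ha0, ha1⟩ := h a (Multiset.mem_cons_self a t)
    rw [Multiset.prod_cons]
    rcases eq_or_ne t 0 with rfl | ht
    · simpa using ha1
    · have htp : t.prod < 1 := ih ht (fun x hx => h x (Multiset.mem_cons_of_mem hx))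
      have htn : 0 ≤ t.prod := Multiset.prod_nonneg (fun x hx => (h x (Multiset.mem_cons_of_mem hx)).1)
      calc a * t.prod ≤ 1 * t.prod := by nlinarith
        _ < 1 := by nlinarith

/-- Kronecker-style key lemma: if `(ζ + ζ⁻¹)/2` is an algebraic integer, where `ζ`
is a primitive `b`-th root of unity with `b ≥ 3`, then it is zero. -/
lemma key {ζ y : ℂ} {b : ℕ} (hb : 3 ≤ b) (hζ : IsPrimitiveRoot ζ b)
    (hy : y = (ζ + ζ⁻¹) / 2) (hint : IsIntegral ℤ y) : y = 0 := by
  have hb0 : 0 < b := by omega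
  haveI : NeZero b := ⟨by omega⟩
  have hζQ : IsIntegral ℚ ζ := by
    refine ⟨X ^ b - 1, monic_X_pow_sub_C 1 (by omega), ?_⟩
    simp [hζ.pow_eq_one]
  have hyQ : IsIntegral ℚ y := hint.tower_top
  haveI : FiniteDimensional ℚ ℚ⟮ζ⟯ := IntermediateField.adjoin.finiteDimensional hζQ
  haveI : NumberField ℚ⟮ζ⟯ := ⟨⟩
  have hζmem : ζ ∈ ℚ⟮ζ⟯ := IntermediateField.mem_adjoin_simple_self ℚ ζ
  have hymem : y ∈ ℚ⟮ζ⟯ := by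
    rw [hy]
    exact div_mem (add_mem hζmem (inv_mem hζmem)) (by exact_mod_cast _root_.natCast_mem ℚ⟮ζ⟯ 2)
  set F := ℚ⟮ζ⟯
  set y' : F := ⟨y, hymem⟩ with hy'
  set ζ' : F := ⟨ζ, hζmem⟩ with hζ'
  have hmin : minpoly ℚ y = minpoly ℚ y' := by
    have := minpoly.algebraMap_eq (A := ℚ) (B := F) (B' := ℂ) (algebraMap F ℂ).injective y'
    simpa using this
  have hminζ : minpoly ℚ ζ = minpoly ℚ ζ' := by
    have := minpoly.algebraMap_eq (A := ℚ) (B := F) (B' := ℂ) (algebraMap F ℂ).injective ζ'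
    simpa using this
  set p := minpoly ℚ y with hp
  set P := p.map (algebraMap ℚ ℂ) with hP
  have hroot : ∀ μ ∈ P.roots, ‖μ‖ < 1 := by
    intro μ hμ
    have hμ' : μ ∈ (minpoly ℚ y').rootSet ℂ := by
      rw [← hmin, mem_rootSet]
      refine ⟨minpoly.ne_zero hyQ, ?_⟩
      rw [aeval_def, ← eval_map]
      exact isRoot_of_mem_roots hμ
    rw [← NumberField.Embeddings.range_eval_eq_rootSet_minpoly F ℂ y'] at hμ'
    obtain ⟨φ, hφ⟩ := hμ'
    have hφ' : φ y' = μ := hφ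
    obtain ⟨ξ, hξ⟩ : ∃ x : ℂ, φ ζ' = x := ⟨φ ζ', rfl⟩
    have hξprim : IsPrimitiveRoot ξ b := by
      have h1 : aeval ζ' (cyclotomic b ℚ) = 0 := by
        rw [cyclotomic_eq_minpoly_rat (μ := ζ) hζ hb0, hminζ]
        exact minpoly.aeval ℚ ζ'
      have h2 : aeval ξ (cyclotomic b ℚ) = 0 := by
        rw [← hξ]
        rw [show (aeval (φ ζ')) (cyclotomic b ℚ)
            = φ.toRatAlgHom ((aeval ζ') (cyclotomic b ℚ)) from
          Polynomial.aeval_algHom_apply φ.toRatAlgHom ζ' (cyclotomic b ℚ), h1, map_zero]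
      have h3 : (cyclotomic b ℂ).IsRoot ξ := by
        rw [IsRoot, ← map_cyclotomic b (algebraMap ℚ ℂ), eval_map, ← aeval_def]
        exact h2
      exact isRoot_cyclotomic_iff.mp h3
    have hξnorm : ‖ξ‖ = 1 := Complex.norm_eq_one_of_pow_eq_one hξprim.pow_eq_one (by omega)
    have hy'eq : y' = (ζ' + ζ'⁻¹) / 2 := by
      apply Subtype.ext
      push_cast
      exact hy
    have hμeq : μ = (ξ + ξ⁻¹) / 2 := by
      rw [← hφ', hy'eq, map_div₀, map_add, map_inv₀, hξ, map_ofNat]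
    have hinv : ξ⁻¹ = (starRingEnd ℂ) ξ := Complex.inv_eq_conj hξnorm
    have hμre : μ = ((ξ.re : ℂ)) := by
      rw [hμeq, hinv, Complex.add_conj]
      push_cast
      ring
    have hne : ξ ≠ 1 ∧ ξ ≠ -1 := by
      constructor <;> rintro rfl
      · have h := hξprim.dvd_of_pow_eq_one 1 (by norm_num)
        have := Nat.le_of_dvd one_pos h
        omega
      · have h := hξprim.dvd_of_pow_eq_one 2 (by norm_num)
        have := Nat.le_of_dvd two_pos h
        omega
    have hsq : ξ.re * ξ.re + ξ.im * ξ.im = 1 := by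
      have h := Complex.sq_norm ξ
      rw [Complex.normSq_apply, hξnorm] at h
      nlinarith [h]
    have him : ξ.im ≠ 0 := by
      intro h0
      rw [h0] at hsq
      have h1 : ξ.re * ξ.re = 1 := by linarith
      rcases mul_self_eq_one_iff.mp h1 with h | h
      · exact hne.1 (by apply Complex.ext <;> simp [h0, h])
      · exact hne.2 (by apply Complex.ext <;> simp [h0, h])
    have hlt : ξ.re * ξ.re < 1 := by nlinarith [mul_self_pos.mpr him]
    rw [hμre, Complex.norm_real, Real.norm_eq_abs, abs_lt]
    constructor <;> nlinarith
  have hPmonic : P.Monic := (minpoly.monic hyQ).map _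
  have hPsplits : Splits P := IsAlgClosed.splits P
  have hcard : Multiset.card P.roots = P.natDegree := splits_iff_card_roots.mp hPsplits
  have hdeg : 1 ≤ P.natDegree := by
    rw [hP, natDegree_map]
    exact minpoly.natDegree_pos hyQ
  have habs : ‖P.coeff 0‖ < 1 := by
    rw [hPsplits.coeff_zero_eq_prod_roots_of_monic hPmonic, norm_mul, norm_pow]
    rw [show ‖P.roots.prod‖ = normHom P.roots.prod from rfl, map_multiset_prod (normHom (α := ℂ))]
    have h1 : ‖(-1 : ℂ)‖ = 1 := by simp
    rw [h1, one_pow, one_mul]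
    apply multiset_prod_lt_one
    · intro h0
      rw [Multiset.map_eq_zero] at h0
      rw [h0] at hcard
      simp at hcard
      omega
    · intro x hx
      obtain ⟨μ, hμ, rfl⟩ := Multiset.mem_map.mp hx
      exact ⟨norm_nonneg μ, hroot μ hμ⟩
  have hzq : p = (minpoly ℤ y).map (algebraMap ℤ ℚ) :=
    minpoly.isIntegrallyClosed_eq_field_fractions' ℚ hint
  have hc0 : P.coeff 0 = (((minpoly ℤ y).coeff 0 : ℤ) : ℂ) := by
    rw [hP, coeff_map, hzq, coeff_map]
    simp
  rw [hc0] at habs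
  have hk : (minpoly ℤ y).coeff 0 = 0 := by
    have h2 : |((minpoly ℤ y).coeff 0 : ℝ)| < 1 := by
      simpa using habs
    have h3 : |(minpoly ℤ y).coeff 0| < 1 := by exact_mod_cast h2
    rwa [Int.abs_lt_one_iff] at h3
  have hp0 : p.coeff 0 = 0 := by
    rw [hzq, coeff_map, hk]
    simp
  exact (minpoly.coeff_zero_eq_zero hyQ).mp hp0

/-- Włodarski's lemma: if `α` is not an integer multiple of `π/4` and
`cos β = cos² α`, then `α` or `β` is an irrational multiple of `π`. -/
theorem wlodarski (α β : ℝ)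
    (hα : ¬ ∃ n : ℤ, α = n * (Real.pi / 4))
    (hβ : Real.cos β = (Real.cos α) ^ 2) :
    (¬ ∃ q : ℚ, α = q * Real.pi) ∨ (¬ ∃ q : ℚ, β = q * Real.pi) := by
  by_contra h
  push_neg at h
  obtain ⟨⟨q, hq⟩, r, hr⟩ := h
  have hπ := Real.pi_pos
  set ζ : ℂ := Complex.exp (2 * α * Complex.I) with hζdef
  have hqd : ((q.den : ℂ)) * (q : ℂ) = (q.num : ℂ) := by
    have h0 : (q.den : ℚ) * q = q.num := by
      have := Rat.num_div_den q
      exact Rat.den_mul_eq_num q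
    exact_mod_cast h0
  have hζpow : ζ ^ q.den = 1 := by
    rw [hζdef, ← Complex.exp_nat_mul, Complex.exp_eq_one_iff]
    refine ⟨q.num, ?_⟩
    rw [hq]
    push_cast
    linear_combination (2 * (Real.pi : ℂ) * Complex.I) * hqd
  set b := orderOf ζ with hbdef
  have hprim : IsPrimitiveRoot ζ b := IsPrimitiveRoot.orderOf ζ
  have hbpos : 0 < b :=
    orderOf_pos_iff.mpr (isOfFinOrder_iff_pow_eq_one.mpr ⟨q.den, q.pos, hζpow⟩)
  rcases le_or_gt b 2 with hb2 | hb3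
  · -- small order: ζ² = 1, so α is a multiple of π/2
    have hdvd : b ∣ 2 := by
      interval_cases b
      · norm_num
      · norm_num
    have hζ2 : ζ ^ 2 = 1 := orderOf_dvd_iff_pow_eq_one.mp hdvd
    rw [hζdef, ← Complex.exp_nat_mul, Complex.exp_eq_one_iff] at hζ2
    obtain ⟨n, hn⟩ := hζ2
    have him := congrArg Complex.im hn
    simp [Complex.mul_im, Complex.mul_re] at him
    -- him : should give 2 * (2 * α) = n * 2π  or similar
    apply hα
    refine ⟨2 * n, ?_⟩
    push_cast
    nlinarith [him]
  · -- main case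
    set η : ℂ := Complex.exp (β * Complex.I) with hηdef
    have hrd : ((r.den : ℂ)) * (r : ℂ) = (r.num : ℂ) := by
      have h0 : (r.den : ℚ) * r = r.num := by
        have := Rat.num_div_den r
        exact Rat.den_mul_eq_num r
      exact_mod_cast h0
    have hηpow : η ^ (2 * r.den) = 1 := by
      rw [hηdef, ← Complex.exp_nat_mul, Complex.exp_eq_one_iff]
      refine ⟨r.num, ?_⟩
      rw [hr]
      push_cast
      linear_combination (2 * (Real.pi : ℂ) * Complex.I) * hrd
    have hηne : η ≠ 0 := Complex.exp_ne_zero _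
    have hηinv : η⁻¹ = η ^ (2 * r.den - 1) := by
      have hpos : 0 < 2 * r.den := by positivity
      refine (inv_eq_of_mul_eq_one_right ?_)
      rw [← pow_succ']
      rw [show 2 * r.den - 1 + 1 = 2 * r.den by omega]
      exact hηpow
    have hηint : IsIntegral ℤ η := by
      refine ⟨X ^ (2 * r.den) - C 1, monic_X_pow_sub_C 1 (by positivity), ?_⟩
      simp [hηpow]
    set y : ℂ := ((Real.cos (2 * α) : ℝ) : ℂ) with hydef
    have hζsum : ζ + ζ⁻¹ = 2 * Complex.cos (2 * (α : ℂ)) := by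
      rw [hζdef, ← Complex.exp_neg]
      rw [show (2 * (α:ℂ) * Complex.I) = (2 * (α:ℂ)) * Complex.I by ring]
      rw [show -((2 * (α:ℂ)) * Complex.I) = (-(2 * (α:ℂ))) * Complex.I by ring]
      rw [Complex.exp_mul_I, Complex.exp_mul_I, Complex.cos_neg, Complex.sin_neg]
      ring
    have hηsum : η + η⁻¹ = 2 * Complex.cos (β : ℂ) := by
      rw [hηdef, ← Complex.exp_neg]
      rw [show -((β:ℂ) * Complex.I) = (-(β:ℂ)) * Complex.I by ring]
      rw [Complex.exp_mul_I, Complex.exp_mul_I, Complex.cos_neg, Complex.sin_neg]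
      ring
    have hcos2 : Real.cos (2 * α) = 2 * Real.cos β - 1 := by
      rw [Real.cos_two_mul, hβ]
    have hy1 : y = (ζ + ζ⁻¹) / 2 := by
      rw [hζsum, hydef, Complex.ofReal_cos]
      push_cast
      ring
    have hy2 : y = η + η⁻¹ - 1 := by
      rw [hηsum, hydef, hcos2]
      push_cast
      ring
    have hyint : IsIntegral ℤ y := by
      rw [hy2, hηinv]
      exact (hηint.add (hηint.pow _)).sub isIntegral_one
    have hy0 : y = 0 := key hb3 hprim hy1 hyint
    have hcos0 : Real.cos (2 * α) = 0 := by
      have h' : ((Real.cos (2 * α) : ℝ) : ℂ) = 0 := hy0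
      exact_mod_cast h'
    obtain ⟨k, hk⟩ := Real.cos_eq_zero_iff.mp hcos0
    apply hα
    refine ⟨2 * k + 1, ?_⟩
    push_cast
    linarith
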